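/- For μ = c_iμ^i with c_i ∈ ℝ and μ^i the dual basis to the partially reduced horizontal gauge symmetries, the restriction shift_μ := Shift_μ|_{J̃^{-1}(μ)} : J̃^{-1}(μ) → J̃^{-1}(0) is a well-defined F-equivariant diffeomorphism; hence it descends to a diffeomorphism shift̄_μ : J̃^{-1}(μ)/F → J̃^{-1}(0)/F with shift̄_μ ∘ ρ_μ = ρ₀ ∘ shift_μ. -/
import Mathlib


/-!
STATEMENT 16.  For `μ = c_i μ^i` with `c_i ∈ ℝ` and `μ^i` the dual basis to the
partially reduced horizontal gauge symmetries, the restriction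
`shift_μ := Shift_μ |_{J̃⁻¹(μ)} : J̃⁻¹(μ) → J̃⁻¹(0)` is a well-defined
`F`-equivariant diffeomorphism; hence it descends to a diffeomorphism
`shift̄_μ : J̃⁻¹(μ)/F → J̃⁻¹(0)/F` with `shift̄_μ ∘ ρ_μ = ρ₀ ∘ shift_μ`.

Concrete model: `T*Q̃ = Qt × (Et →ₗ[ℝ] ℝ)` in a trivialisation; the cotangent
lift of the `F`-action is the map `act`, characterised by the pairing property
`⟨act h α, TΨ̃_h v⟩ = ⟨α, v⟩` together with `(act h α).1 = h • α.1`; the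
canonical momentum map is `J̃(x,p) = p ∘ σ̃_x : 𝔣 → ℝ`; the level sets are
`Lμ = J̃⁻¹(μ)` and `L0 = J̃⁻¹(0)`.
-/

theorem statement16
    {Qt Et 𝔣 F Pμ P0 : Type*} [Group F] [MulAction F Qt]
    [AddCommGroup Et] [Module ℝ Et] [AddCommGroup 𝔣] [Module ℝ 𝔣]
    {k : ℕ}
    -- gauge symmetries η_i, connection 1-forms Ỹ^i, dual basis μ^i
    (ηt : Fin k → Qt → 𝔣)
    (Yt : Fin k → Qt → Et →ₗ[ℝ] ℝ)
    (μd : Fin k → Qt → 𝔣 →ₗ[ℝ] ℝ)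
    (hdual : ∀ (i j : Fin k) (x : Qt), μd i x (ηt j x) = if i = j then (1:ℝ) else 0)
    (hsep : ∀ (x : Qt) (φ : 𝔣 →ₗ[ℝ] ℝ), (∀ i : Fin k, φ (ηt i x) = 0) → φ = 0)
    -- infinitesimal generators of the F-action on Q̃ and the connection property
    (σt : Qt → 𝔣 →ₗ[ℝ] Et)
    (hY : ∀ (i j : Fin k) (x : Qt),
      Yt i x (σt x (ηt j x)) = if i = j then (1:ℝ) else 0)
    -- the tangent lift of the F-action on Q̃ and the cotangent-lifted action on
    -- T*Q̃ = Qt × Et*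
    (TΨt : F → Qt → Et →ₗ[ℝ] Et) (hTΨt : ∀ h x, Function.Bijective (TΨt h x))
    (act : F → Qt × (Et →ₗ[ℝ] ℝ) → Qt × (Et →ₗ[ℝ] ℝ))
    (hact1 : ∀ h α, (act h α).1 = h • α.1)
    (hactpair : ∀ (h : F) (α : Qt × (Et →ₗ[ℝ] ℝ)) (v : Et),
      (act h α).2 (TΨt h α.1 v) = α.2 v)
    (hactmul : ∀ (h h' : F) (α), act h (act h' α) = act (h * h') α)
    (hactone : ∀ α, act 1 α = α)
    -- equivariance of the data: the 1-form c_i Ỹ^i is F-invariant (the J̃_i are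
    -- F-invariant and the connection is equivariant)
    (c : Fin k → ℝ)
    (hYequiv : ∀ (h : F) (x : Qt) (v : Et),
      (∑ i, c i • Yt i (h • x)) (TΨt h x v) = (∑ i, c i • Yt i x) v)
    -- the level sets J̃⁻¹(μ) and J̃⁻¹(0), with J̃(x,p) = p ∘ σ̃_x
    (Lμ L0 : Set (Qt × (Et →ₗ[ℝ] ℝ)))
    (hLμ : Lμ = {α | α.2 ∘ₗ σt α.1 = ∑ i, c i • μd i α.1})
    (hL0 : L0 = {α | α.2 ∘ₗ σt α.1 = 0})
    -- the shift map Shift_μ (α) = α − ⟨μ, Ã⟩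
    (Shift : Qt × (Et →ₗ[ℝ] ℝ) → Qt × (Et →ₗ[ℝ] ℝ))
    (hShift : ∀ α, Shift α = (α.1, α.2 - ∑ i, c i • Yt i α.1))
    -- the orbit projections ρ_μ : J̃⁻¹(μ) → J̃⁻¹(μ)/F and ρ₀ : J̃⁻¹(0) → J̃⁻¹(0)/F
    (ρμ : Qt × (Et →ₗ[ℝ] ℝ) → Pμ) (ρ0 : Qt × (Et →ₗ[ℝ] ℝ) → P0)
    (hρμsurj : ∀ x : Pμ, ∃ α ∈ Lμ, ρμ α = x)
    (hρ0surj : ∀ x : P0, ∃ α ∈ L0, ρ0 α = x)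
    (hρμfib : ∀ α ∈ Lμ, ∀ β ∈ Lμ, (ρμ α = ρμ β ↔ ∃ h : F, act h α = β))
    (hρ0fib : ∀ α ∈ L0, ∀ β ∈ L0, (ρ0 α = ρ0 β ↔ ∃ h : F, act h α = β)) :
    -- shift_μ is a well-defined bijection J̃⁻¹(μ) → J̃⁻¹(0):
    Set.BijOn Shift Lμ L0 ∧
    -- shift_μ is F-equivariant:
    (∀ (h : F) (α : Qt × (Et →ₗ[ℝ] ℝ)), α ∈ Lμ → Shift (act h α) = act h (Shift α)) ∧
    -- hence it descends to a diffeomorphism shift̄_μ : J̃⁻¹(μ)/F → J̃⁻¹(0)/F with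
    -- shift̄_μ ∘ ρ_μ = ρ₀ ∘ shift_μ:
    (∃ sbar : Pμ → P0,
      (∀ α ∈ Lμ, sbar (ρμ α) = ρ0 (Shift α)) ∧ Function.Bijective sbar) := by
  classical
  -- key: the connection composed with the generators gives the dual basis
  have key : ∀ x : Qt, (∑ i, c i • Yt i x) ∘ₗ σt x = ∑ i, c i • μd i x := by
    intro x
    have h0 : ((∑ i, c i • Yt i x) ∘ₗ σt x) - (∑ i, c i • μd i x) = 0 := by
      apply hsep x
      intro j
      simp [LinearMap.sub_apply, LinearMap.sum_apply, hY, hdual]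
    exact sub_eq_zero.mp h0
  -- the inverse shift
  set Shift' : Qt × (Et →ₗ[ℝ] ℝ) → Qt × (Et →ₗ[ℝ] ℝ) :=
    fun α => (α.1, α.2 + ∑ i, c i • Yt i α.1) with hShift'
  have hSS' : ∀ α, Shift' (Shift α) = α := by
    intro α
    rw [hShift]
    simp [hShift']
  have hS'S : ∀ α, Shift (Shift' α) = α := by
    intro α
    rw [hShift]
    simp [hShift']
  have hSinj : Function.Injective Shift :=
    Function.LeftInverse.injective hSS'
  have hmaps : Set.MapsTo Shift Lμ L0 := by
    intro α hα
    rw [hLμ, Set.mem_setOf_eq] at hα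
    rw [hL0, Set.mem_setOf_eq, hShift]
    simp only
    rw [LinearMap.sub_comp, hα, key, sub_self]
  have hmaps' : Set.MapsTo Shift' L0 Lμ := by
    intro α hα
    rw [hL0, Set.mem_setOf_eq] at hα
    rw [hLμ, Set.mem_setOf_eq, hShift']
    simp only
    rw [LinearMap.add_comp, hα, key, zero_add]
  have hbij : Set.BijOn Shift Lμ L0 := by
    refine ⟨hmaps, fun a _ b _ hab => hSinj hab, ?_⟩
    intro β hβ
    exact ⟨Shift' β, hmaps' hβ, hS'S β⟩
  -- equivariance (holds globally)
  have hequiv : ∀ (h : F) (α : Qt × (Et →ₗ[ℝ] ℝ)), Shift (act h α) = act h (Shift α) := by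
    intro h α
    have hfst1 : (Shift (act h α)).1 = h • α.1 := by rw [hShift]; simp [hact1]
    have hfst2 : (act h (Shift α)).1 = h • α.1 := by rw [hact1, hShift]
    refine Prod.ext (hfst1.trans hfst2.symm) ?_
    apply LinearMap.ext
    intro w
    obtain ⟨v, rfl⟩ := (hTΨt h α.1).2 w
    have hA : (Shift (act h α)).2 (TΨt h α.1 v)
        = α.2 v - (∑ i, c i • Yt i α.1) v := by
      rw [hShift]
      simp only [LinearMap.sub_apply]
      rw [hact1, hYequiv, hactpair]
    have hB : (act h (Shift α)).2 (TΨt h α.1 v)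
        = α.2 v - (∑ i, c i • Yt i α.1) v := by
      have hs1 : (Shift α).1 = α.1 := by rw [hShift]
      have := hactpair h (Shift α) v
      rw [hs1] at this
      rw [this, hShift]
      simp
    rw [hA, hB]
  refine ⟨hbij, fun h α _ => hequiv h α, ?_⟩
  -- construct sbar via choice of representatives
  set sbar : Pμ → P0 := fun x => ρ0 (Shift (Classical.choose (hρμsurj x))) with hsbar
  have hrep : ∀ x : Pμ, Classical.choose (hρμsurj x) ∈ Lμ ∧
      ρμ (Classical.choose (hρμsurj x)) = x := by
    intro x
    obtain ⟨h1, h2⟩ := Classical.choose_spec (hρμsurj x)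
    exact ⟨h1, h2⟩
  have hdesc : ∀ α ∈ Lμ, sbar (ρμ α) = ρ0 (Shift α) := by
    intro α hα
    obtain ⟨hmem, heq⟩ := hrep (ρμ α)
    obtain ⟨h, hh⟩ := (hρμfib _ hmem α hα).mp heq
    rw [hsbar]
    refine (hρ0fib _ (hmaps hmem) _ (hmaps hα)).mpr ⟨h, ?_⟩
    rw [← hequiv, hh]
  refine ⟨sbar, hdesc, ?_, ?_⟩
  · -- injective
    intro x y hxy
    obtain ⟨hxm, hxe⟩ := hrep x
    obtain ⟨hym, hye⟩ := hrep y
    rw [hsbar] at hxy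
    obtain ⟨h, hh⟩ := (hρ0fib _ (hmaps hxm) _ (hmaps hym)).mp hxy
    rw [← hequiv] at hh
    have : act h (Classical.choose (hρμsurj x)) = Classical.choose (hρμsurj y) :=
      hSinj hh
    have := (hρμfib _ hxm _ hym).mpr ⟨h, this⟩
    rw [hxe, hye] at this
    exact this
  · -- surjective
    intro y
    obtain ⟨β, hβ, hβe⟩ := hρ0surj y
    refine ⟨ρμ (Shift' β), ?_⟩
    rw [hdesc _ (hmaps' hβ), hS'S, hβe]
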